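/- There is an absolute constant C > 0 such that the following holds. Let ε, δ ∈ (0,1) and let S ∈ ℝ^{r×n} be a Countsketch matrix with r ≥ C/(ε²δ). Then the distribution of S has the (ε, δ, 2)-JL moment property, i.e., for every unit vector x ∈ ℝ^n, E[(‖Sx‖₂² − 1)²] ≤ ε²δ. -/

import Mathlib

open MeasureTheory ProbabilityTheory Matrix

/-- Squared Euclidean norm of a vector. -/
noncomputable def vecNormSq {n : Type*} [Fintype n] (v : n → ℝ) : ℝ := ∑ i, (v i) ^ 2

/-- A random matrix `S` has the `(ε, δ, ℓ)`-JL moment property if for every unit vector `x`,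
`E[|‖Sx‖₂² − 1|^ℓ] ≤ ε^ℓ·δ`. -/
def JLMoment {Ω : Type*} [MeasurableSpace Ω] (μ : Measure Ω) {m n : Type*} [Fintype m]
    [Fintype n] (S : Ω → Matrix m n ℝ) (ε δ : ℝ) (ℓ : ℕ) : Prop :=
  ∀ x : n → ℝ, vecNormSq x = 1 →
    ∫ ω, |vecNormSq ((S ω).mulVec x) - 1| ^ ℓ ∂μ ≤ ε ^ ℓ * δ

/-- `S : Ω → ℝ^{r×n}` is a Countsketch matrix: the columns are independent, and in each
column a uniformly random entry is set to a uniformly random sign, all other entries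
being `0`. -/
def IsCountsketch {Ω : Type*} [MeasurableSpace Ω] (μ : Measure Ω) {r n : ℕ}
    (S : Ω → Matrix (Fin r) (Fin n) ℝ) : Prop :=
  ∃ (row : Ω → Fin n → Fin r) (sign : Ω → Fin n → ℝ),
    (∀ ω i j, S ω i j = if row ω j = i then sign ω j else 0) ∧
    iIndepFun (fun j ω => (row ω j, sign ω j)) μ ∧
    (∀ ω j, sign ω j = 1 ∨ sign ω j = -1) ∧
    (∀ (j : Fin n) (i : Fin r) (s : ℝ), s = 1 ∨ s = -1 →
      μ {ω | row ω j = i ∧ sign ω j = s} = 1 / (2 * (r : ENNReal)))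

/-- There is an absolute constant `C > 0` so that any Countsketch matrix `S ∈ ℝ^{r×n}` with
`r ≥ C/(ε²δ)` has the `(ε, δ, 2)`-JL moment property. -/


noncomputable def sgn (b : Bool) : ℝ := if b then 1 else -1

lemma sgn_sq (b : Bool) : sgn b * sgn b = 1 := by cases b <;> simp [sgn]

lemma sgn_not (b : Bool) : sgn (!b) = - sgn b := by cases b <;> simp [sgn]

lemma sign_sum_zero {n : ℕ} (i0 j k l : Fin n) (h1 : j ≠ i0) (h2 : k ≠ i0) (h3 : l ≠ i0) :
    ∑ b : Fin n → Bool, sgn (b i0) * sgn (b j) * sgn (b k) * sgn (b l) = 0 := by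
  set f : (Fin n → Bool) → ℝ := fun b => sgn (b i0) * sgn (b j) * sgn (b k) * sgn (b l) with hf
  have hinv : Function.Involutive (fun b : Fin n → Bool => Function.update b i0 (!(b i0))) := by
    intro b
    funext u
    by_cases hu : u = i0
    · subst hu; simp [Function.update_self]
    · simp [Function.update_of_ne hu]
  have hneg : ∀ b, f ((hinv.toPerm _) b) = - f b := by
    intro b
    simp only [hf, Function.Involutive.coe_toPerm]
    rw [Function.update_self, Function.update_of_ne h1, Function.update_of_ne h2,
      Function.update_of_ne h3, sgn_not]
    ring
  have := Equiv.sum_comp (hinv.toPerm _) f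
  have h2' : ∑ b : Fin n → Bool, f b = - ∑ b : Fin n → Bool, f b := by
    calc ∑ b : Fin n → Bool, f b = ∑ b : Fin n → Bool, f ((hinv.toPerm _) b) := this.symm
    _ = ∑ b : Fin n → Bool, - f b := by simp_rw [hneg]
    _ = - ∑ b : Fin n → Bool, f b := by rw [Finset.sum_neg_distrib]
  linarith

lemma hash_count {n r : ℕ} (j k : Fin n) (hjk : j ≠ k) :
    ∑ h : Fin n → Fin r, (if h j = h k then (1:ℝ) else 0) = (r:ℝ)^(n-1) := by
  have hn2 : 2 ≤ n := by
    have : Nontrivial (Fin n) := ⟨⟨j, k, hjk⟩⟩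
    have := Fintype.one_lt_card_iff_nontrivial.mpr this
    simp at this; omega
  have step1 : ∀ h : Fin n → Fin r,
      (if h j = h k then (1:ℝ) else 0)
        = ∑ i, (if h j = i then (1:ℝ) else 0) * (if h k = i then 1 else 0) := by
    intro h
    rw [Finset.sum_eq_single (h j)]
    · simp [eq_comm]
    · intro i _ hi
      rw [if_neg (fun hh => hi hh.symm), zero_mul]
    · simp
  have step2 : ∀ (i : Fin r) (h : Fin n → Fin r),
      (if h j = i then (1:ℝ) else 0) * (if h k = i then 1 else 0)
        = ∏ u, (if u = j ∨ u = k then (if h u = i then (1:ℝ) else 0) else 1) := by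
    intro i h
    rw [← Finset.mul_prod_erase Finset.univ _ (Finset.mem_univ j),
        ← Finset.mul_prod_erase _ _
          (Finset.mem_erase.mpr ⟨fun hh => hjk hh.symm, Finset.mem_univ k⟩)]
    rw [if_pos (Or.inl rfl), if_pos (Or.inr rfl)]
    rw [Finset.prod_eq_one, mul_one]
    intro u hu
    simp only [Finset.mem_erase] at hu
    rw [if_neg]
    push_neg
    exact ⟨hu.2.1, hu.1⟩
  simp_rw [step1]
  rw [Finset.sum_comm]
  have step3 : ∀ i : Fin r,
      ∑ h : Fin n → Fin r, (if h j = i then (1:ℝ) else 0) * (if h k = i then 1 else 0)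
        = (r:ℝ)^(n-2) := by
    intro i
    simp_rw [step2 i]
    have key := Finset.prod_univ_sum (fun _ : Fin n => (Finset.univ : Finset (Fin r)))
      (fun u a => if u = j ∨ u = k then (if a = i then (1:ℝ) else 0) else 1)
    rw [Fintype.piFinset_univ] at key
    rw [← key]
    have : ∀ u : Fin n, (∑ a : Fin r, if u = j ∨ u = k then (if a = i then (1:ℝ) else 0) else 1)
        = if u = j ∨ u = k then 1 else (r:ℝ) := by
      intro u
      by_cases hu : u = j ∨ u = k <;> simp [hu]
    simp_rw [this]
    rw [Finset.prod_ite, Finset.prod_const, Finset.prod_const, one_pow, one_mul]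
    congr 1
    have : (Finset.univ.filter fun u : Fin n => ¬(u = j ∨ u = k)) = Finset.univ \ {j, k} := by
      ext u; simp [not_or]
    rw [this, Finset.card_sdiff_of_subset (by simp)]
    rw [Finset.card_pair hjk]
    simp
  simp_rw [step3]
  rw [Finset.sum_const, Finset.card_univ, Fintype.card_fin, nsmul_eq_mul]
  rw [← pow_succ']
  congr 1
  omega

lemma W_expand {n r : ℕ} (x : Fin n → ℝ) (hx : ∑ j, x j ^ 2 = 1)
    (h : Fin n → Fin r) (b : Fin n → Bool) :
    (∑ i, (∑ j, if h j = i then sgn (b j) * x j else 0)^2) - 1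
      = ∑ p ∈ Finset.univ.offDiag,
          (x p.1 * x p.2 * sgn (b p.1) * sgn (b p.2)) * (if h p.1 = h p.2 then 1 else 0) := by
  have step0 : ∀ i : Fin r, (∑ j, if h j = i then sgn (b j) * x j else 0)^2
      = ∑ j, ∑ k, (if h j = i then sgn (b j) * x j else 0) * (if h k = i then sgn (b k) * x k else 0) := by
    intro i
    rw [sq, Finset.sum_mul_sum]
  simp_rw [step0]
  rw [Finset.sum_comm]
  have step1 : ∀ j : Fin n, ∀ i : Fin r,
      (∑ k, (if h j = i then sgn (b j) * x j else 0) * (if h k = i then sgn (b k) * x k else 0))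
      = ∑ k, (if h j = i then (sgn (b j) * x j) * (if h k = i then sgn (b k) * x k else 0) else 0) := by
    intro j i
    apply Finset.sum_congr rfl
    intro k _
    by_cases hj : h j = i <;> simp [hj]
  simp_rw [step1]
  have step2 : ∀ j : Fin n, ∀ k : Fin n,
      (∑ i : Fin r, if h j = i then (sgn (b j) * x j) * (if h k = i then sgn (b k) * x k else 0) else 0)
      = (x j * x k * sgn (b j) * sgn (b k)) * (if h j = h k then 1 else 0) := by
    intro j k
    rw [Finset.sum_eq_single (h j)]
    · rw [if_pos rfl]
      by_cases hk : h k = h j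
      · rw [if_pos hk, if_pos hk.symm]; ring
      · rw [if_neg hk, if_neg (fun hh => hk hh.symm)]; ring
    · intro i _ hi
      rw [if_neg (fun hh => hi hh.symm)]
    · simp
  have step15 : ∀ j : Fin n,
      (∑ i : Fin r, ∑ k : Fin n, if h j = i then (sgn (b j) * x j) * (if h k = i then sgn (b k) * x k else 0) else 0)
      = ∑ k : Fin n, ∑ i : Fin r, if h j = i then (sgn (b j) * x j) * (if h k = i then sgn (b k) * x k else 0) else 0 := by
    intro j; rw [Finset.sum_comm]
  simp_rw [step15, step2]
  rw [← Finset.sum_product']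
  rw [show (Finset.univ ×ˢ Finset.univ : Finset (Fin n × Fin n))
      = Finset.univ.diag ∪ Finset.univ.offDiag from (Finset.diag_union_offDiag _).symm]
  rw [Finset.sum_union (Finset.disjoint_diag_offDiag _)]
  rw [Finset.sum_diag]
  have hdiag : (∑ j : Fin n, (x j * x j * sgn (b j) * sgn (b j)) * (if h j = h j then (1:ℝ) else 0)) = ∑ j, x j ^ 2 := by
    apply Finset.sum_congr rfl
    intro j _
    rw [if_pos rfl, mul_one]
    nlinarith [sgn_sq (b j)]
  rw [hdiag, hx]
  ring

lemma fact_prod {n r : ℕ} (x : Fin n → ℝ) (p q : Fin n × Fin n) :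
    (∑ e : (Fin n → Fin r) × (Fin n → Bool),
      ((x p.1 * x p.2 * sgn (e.2 p.1) * sgn (e.2 p.2)) * (if e.1 p.1 = e.1 p.2 then 1 else 0))
      * ((x q.1 * x q.2 * sgn (e.2 q.1) * sgn (e.2 q.2)) * (if e.1 q.1 = e.1 q.2 then 1 else 0)))
    = (x p.1 * x p.2 * x q.1 * x q.2)
      * (∑ b : Fin n → Bool, sgn (b p.1) * sgn (b p.2) * sgn (b q.1) * sgn (b q.2))
      * (∑ h : Fin n → Fin r, (if h p.1 = h p.2 then (1:ℝ) else 0) * (if h q.1 = h q.2 then 1 else 0)) := by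
  rw [Fintype.sum_prod_type]
  have h1 : ∀ h : Fin n → Fin r,
      (∑ b : Fin n → Bool,
        ((x p.1 * x p.2 * sgn (b p.1) * sgn (b p.2)) * (if h p.1 = h p.2 then 1 else 0))
        * ((x q.1 * x q.2 * sgn (b q.1) * sgn (b q.2)) * (if h q.1 = h q.2 then 1 else 0)))
      = (∑ b : Fin n → Bool, sgn (b p.1) * sgn (b p.2) * sgn (b q.1) * sgn (b q.2))
        * ((x p.1 * x p.2 * x q.1 * x q.2) * ((if h p.1 = h p.2 then (1:ℝ) else 0) * (if h q.1 = h q.2 then 1 else 0))) := by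
    intro h
    rw [Finset.sum_mul]
    apply Finset.sum_congr rfl
    intro b _
    ring
  simp_rw [h1]
  rw [← Finset.mul_sum, ← Finset.mul_sum]
  ring

lemma sign_sum_match {n : ℕ} (j k l m : Fin n) (hm : (l = j ∧ m = k) ∨ (l = k ∧ m = j)) :
    ∑ b : Fin n → Bool, sgn (b j) * sgn (b k) * sgn (b l) * sgn (b m) = 2^n := by
  have : ∀ b : Fin n → Bool, sgn (b j) * sgn (b k) * sgn (b l) * sgn (b m) = 1 := by
    intro b
    rcases hm with ⟨hl, hm⟩ | ⟨hl, hm⟩ <;> rw [hl, hm] <;>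
      linear_combination (sgn (b k) * sgn (b k)) * sgn_sq (b j) + sgn_sq (b k)
  simp_rw [this]
  rw [Finset.sum_const, Finset.card_univ]
  simp

lemma sign_sum_nonmatch {n : ℕ} (j k l m : Fin n) (hjk : j ≠ k) (hlm : l ≠ m)
    (h1 : ¬(l = j ∧ m = k)) (h2 : ¬(l = k ∧ m = j)) :
    ∑ b : Fin n → Bool, sgn (b j) * sgn (b k) * sgn (b l) * sgn (b m) = 0 := by
  by_cases hjl : j = l
  · -- lonely index is k
    have hlk : l ≠ k := by rw [← hjl]; exact fun hh => hjk hh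
    have hmk : m ≠ k := fun hh => h1 ⟨hjl.symm, hh⟩
    have z := sign_sum_zero k j l m hjk hlk hmk
    rw [← z]
    apply Finset.sum_congr rfl
    intro b _
    ring
  · by_cases hjm : j = m
    · -- lonely index is k
      have hlk : l ≠ k := fun hh => h2 ⟨hh, hjm.symm⟩
      have hmk : m ≠ k := by rw [← hjm]; exact fun hh => hjk hh
      have z := sign_sum_zero k j l m hjk hlk hmk
      rw [← z]
      apply Finset.sum_congr rfl
      intro b _
      ring
    · -- lonely index is j
      exact sign_sum_zero j k l m (fun hh => hjk hh.symm) (fun hh => hjl hh.symm)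
        (fun hh => hjm hh.symm)

lemma ind_sum_match {n r : ℕ} (j k l m : Fin n) (hjk : j ≠ k) (hm : (l = j ∧ m = k) ∨ (l = k ∧ m = j)) :
    ∑ h : Fin n → Fin r, (if h j = h k then (1:ℝ) else 0) * (if h l = h m then 1 else 0)
      = (r:ℝ)^(n-1) := by
  have : ∀ h : Fin n → Fin r, (if h j = h k then (1:ℝ) else 0) * (if h l = h m then 1 else 0)
      = if h j = h k then 1 else 0 := by
    intro h
    have hiff : (if h l = h m then (1:ℝ) else 0) = (if h j = h k then 1 else 0) := by
      rcases hm with ⟨hl, hmm⟩ | ⟨hl, hmm⟩ <;> rw [hl, hmm]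
      simp [eq_comm]
    rw [hiff]
    by_cases hh : h j = h k <;> simp [hh]
  simp_rw [this]
  exact hash_count j k hjk

lemma finite_bound {n r : ℕ} (x : Fin n → ℝ) (hx : ∑ j, x j ^ 2 = 1) :
    ∑ e : (Fin n → Fin r) × (Fin n → Bool),
      ((∑ i, (∑ j, if e.1 j = i then sgn (e.2 j) * x j else 0)^2) - 1)^2
      ≤ 2 * 2^n * (r:ℝ)^(n-1) := by
  have hrw : ∀ e : (Fin n → Fin r) × (Fin n → Bool),
      ((∑ i, (∑ j, if e.1 j = i then sgn (e.2 j) * x j else 0)^2) - 1)^2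
      = ∑ p ∈ Finset.univ.offDiag, ∑ q ∈ Finset.univ.offDiag,
          ((x p.1 * x p.2 * sgn (e.2 p.1) * sgn (e.2 p.2)) * (if e.1 p.1 = e.1 p.2 then 1 else 0))
          * ((x q.1 * x q.2 * sgn (e.2 q.1) * sgn (e.2 q.2)) * (if e.1 q.1 = e.1 q.2 then 1 else 0)) := by
    intro e
    rw [W_expand x hx e.1 e.2, sq, Finset.sum_mul_sum]
  simp_rw [hrw]
  rw [Finset.sum_comm]
  have hswap : ∀ p : Fin n × Fin n,
      (∑ e : (Fin n → Fin r) × (Fin n → Bool), ∑ q ∈ Finset.univ.offDiag,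
          ((x p.1 * x p.2 * sgn (e.2 p.1) * sgn (e.2 p.2)) * (if e.1 p.1 = e.1 p.2 then 1 else 0))
          * ((x q.1 * x q.2 * sgn (e.2 q.1) * sgn (e.2 q.2)) * (if e.1 q.1 = e.1 q.2 then 1 else 0)))
      = ∑ q ∈ Finset.univ.offDiag, ∑ e : (Fin n → Fin r) × (Fin n → Bool),
          ((x p.1 * x p.2 * sgn (e.2 p.1) * sgn (e.2 p.2)) * (if e.1 p.1 = e.1 p.2 then 1 else 0))
          * ((x q.1 * x q.2 * sgn (e.2 q.1) * sgn (e.2 q.2)) * (if e.1 q.1 = e.1 q.2 then 1 else 0)) := by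
    intro p; rw [Finset.sum_comm]
  simp_rw [hswap, fact_prod x]
  -- now: ∑ p ∈ offDiag, ∑ q ∈ offDiag, c p q * SB p q * SH p q ≤ ...
  have hq : ∀ p ∈ Finset.univ.offDiag,
      (∑ q ∈ Finset.univ.offDiag,
        (x p.1 * x p.2 * x q.1 * x q.2)
        * (∑ b : Fin n → Bool, sgn (b p.1) * sgn (b p.2) * sgn (b q.1) * sgn (b q.2))
        * (∑ h : Fin n → Fin r, (if h p.1 = h p.2 then (1:ℝ) else 0) * (if h q.1 = h q.2 then 1 else 0)))
      = 2 * 2^n * (r:ℝ)^(n-1) * (x p.1^2 * x p.2^2) := by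
    intro p hp
    rw [Finset.mem_offDiag] at hp
    obtain ⟨-, -, hpne⟩ := hp
    have hpmem : p ∈ Finset.univ.offDiag := Finset.mem_offDiag.mpr ⟨Finset.mem_univ _, Finset.mem_univ _, hpne⟩
    have hswapmem : p.swap ∈ Finset.univ.offDiag.erase p := by
      rw [Finset.mem_erase]
      constructor
      · intro hh
        exact hpne (congrArg Prod.fst hh).symm
      · exact Finset.mem_offDiag.mpr ⟨Finset.mem_univ _, Finset.mem_univ _, fun hh => hpne hh.symm⟩
    rw [← Finset.add_sum_erase _ _ hpmem, ← Finset.add_sum_erase _ _ hswapmem]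
    have hzero : ∀ q ∈ (Finset.univ.offDiag.erase p).erase p.swap,
        (x p.1 * x p.2 * x q.1 * x q.2)
        * (∑ b : Fin n → Bool, sgn (b p.1) * sgn (b p.2) * sgn (b q.1) * sgn (b q.2))
        * (∑ h : Fin n → Fin r, (if h p.1 = h p.2 then (1:ℝ) else 0) * (if h q.1 = h q.2 then 1 else 0)) = 0 := by
      intro q hqq
      rw [Finset.mem_erase, Finset.mem_erase, Finset.mem_offDiag] at hqq
      obtain ⟨hq1, hq2, -, -, hqne⟩ := hqq
      have hnm1 : ¬(q.1 = p.1 ∧ q.2 = p.2) := by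
        rintro ⟨a, b⟩; exact hq2 (Prod.ext a b)
      have hnm2 : ¬(q.1 = p.2 ∧ q.2 = p.1) := by
        rintro ⟨a, b⟩; exact hq1 (Prod.ext a b)
      rw [sign_sum_nonmatch p.1 p.2 q.1 q.2 hpne hqne hnm1 hnm2]
      ring
    rw [Finset.sum_eq_zero hzero]
    have e1 : (x p.1 * x p.2 * x p.1 * x p.2)
        * (∑ b : Fin n → Bool, sgn (b p.1) * sgn (b p.2) * sgn (b p.1) * sgn (b p.2))
        * (∑ h : Fin n → Fin r, (if h p.1 = h p.2 then (1:ℝ) else 0) * (if h p.1 = h p.2 then 1 else 0))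
        = 2^n * (r:ℝ)^(n-1) * (x p.1^2 * x p.2^2) := by
      rw [sign_sum_match p.1 p.2 p.1 p.2 (Or.inl ⟨rfl, rfl⟩),
        ind_sum_match p.1 p.2 p.1 p.2 hpne (Or.inl ⟨rfl, rfl⟩)]
      ring
    have e2 : (x p.1 * x p.2 * x p.swap.1 * x p.swap.2)
        * (∑ b : Fin n → Bool, sgn (b p.1) * sgn (b p.2) * sgn (b p.swap.1) * sgn (b p.swap.2))
        * (∑ h : Fin n → Fin r, (if h p.1 = h p.2 then (1:ℝ) else 0) * (if h p.swap.1 = h p.swap.2 then 1 else 0))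
        = 2^n * (r:ℝ)^(n-1) * (x p.1^2 * x p.2^2) := by
      rw [show p.swap.1 = p.2 from rfl, show p.swap.2 = p.1 from rfl]
      rw [sign_sum_match p.1 p.2 p.2 p.1 (Or.inr ⟨rfl, rfl⟩),
        ind_sum_match p.1 p.2 p.2 p.1 hpne (Or.inr ⟨rfl, rfl⟩)]
      ring
    rw [e1, e2]
    try ring
  rw [Finset.sum_congr rfl hq]
  rw [← Finset.mul_sum]
  have hle1 : (∑ p ∈ Finset.univ.offDiag, x p.1^2 * x p.2^2) ≤ 1 := by
    have hsub : (Finset.univ.offDiag : Finset (Fin n × Fin n)) ⊆ Finset.univ ×ˢ Finset.univ := by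
      intro p hp
      simp [Finset.mem_product]
    have h1 : (∑ p ∈ Finset.univ.offDiag, x p.1^2 * x p.2^2)
        ≤ ∑ p ∈ Finset.univ ×ˢ Finset.univ, x p.1^2 * x p.2^2 := by
      apply Finset.sum_le_sum_of_subset_of_nonneg hsub
      intro p _ _
      positivity
    have h2 : (∑ p ∈ Finset.univ ×ˢ Finset.univ, (x p.1^2 * x p.2^2 : ℝ)) = 1 := by
      rw [Finset.sum_product]
      simp_rw [← Finset.mul_sum, hx, mul_one]
      exact hx
    linarith
  have hA : (0:ℝ) ≤ 2 * 2^n * (r:ℝ)^(n-1) := by positivity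
  calc (2 * 2^n * (r:ℝ)^(n-1)) * ∑ p ∈ Finset.univ.offDiag, x p.1^2 * x p.2^2
      ≤ (2 * 2^n * (r:ℝ)^(n-1)) * 1 := by
        apply mul_le_mul_of_nonneg_left hle1 hA
    _ = 2 * 2^n * (r:ℝ)^(n-1) := by ring


lemma part_meas {Ω : Type} [MeasurableSpace Ω] (μ : Measure Ω) [IsProbabilityMeasure μ]
    {ι : Type} [Fintype ι] (A : ι → Set Ω) (w : ι → ENNReal)
    (hcover : ∀ ω, ∃ i, ω ∈ A i)
    (hw : ∀ i, μ (A i) = w i) (hsum : ∑ i, w i = 1) (F : Finset ι) :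
    μ (⋃ i ∈ F, A i) = ∑ i ∈ F, w i := by
  classical
  have hwfin : ∀ i, w i ≠ ⊤ := by
    intro i
    rw [← hw i]
    exact measure_ne_top μ _
  apply le_antisymm
  · calc μ (⋃ i ∈ F, A i) ≤ ∑ i ∈ F, μ (A i) := measure_biUnion_finset_le F A
      _ = ∑ i ∈ F, w i := Finset.sum_congr rfl (fun i _ => hw i)
  · have hcfin : (∑ i ∈ Fᶜ, w i) ≠ ⊤ := by
      apply ENNReal.sum_ne_top.mpr
      intro i _
      exact hwfin i
    have hadd : (∑ i ∈ F, w i) + (∑ i ∈ Fᶜ, w i) = 1 := by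
      rw [Finset.sum_add_sum_compl]
      exact hsum
    have huniv : ((⋃ i ∈ F, A i) ∪ (⋃ i ∈ Fᶜ, A i)) = Set.univ := by
      apply Set.eq_univ_of_forall
      intro ω
      obtain ⟨i, hi⟩ := hcover ω
      by_cases hiF : i ∈ F
      · exact Or.inl (Set.mem_biUnion hiF hi)
      · exact Or.inr (Set.mem_biUnion (Finset.mem_compl.mpr hiF) hi)
    have hle : (1:ENNReal) ≤ μ (⋃ i ∈ F, A i) + ∑ i ∈ Fᶜ, w i := by
      calc (1:ENNReal) = μ Set.univ := (measure_univ).symm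
        _ = μ ((⋃ i ∈ F, A i) ∪ (⋃ i ∈ Fᶜ, A i)) := by rw [huniv]
        _ ≤ μ (⋃ i ∈ F, A i) + μ (⋃ i ∈ Fᶜ, A i) := measure_union_le _ _
        _ ≤ μ (⋃ i ∈ F, A i) + ∑ i ∈ Fᶜ, w i := by
            apply add_le_add le_rfl
            calc μ (⋃ i ∈ Fᶜ, A i) ≤ ∑ i ∈ Fᶜ, μ (A i) := measure_biUnion_finset_le _ A
              _ = ∑ i ∈ Fᶜ, w i := Finset.sum_congr rfl (fun i _ => hw i)
    have heq : (∑ i ∈ F, w i) = 1 - (∑ i ∈ Fᶜ, w i) := ENNReal.eq_sub_of_add_eq hcfin hadd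
    rw [heq]
    exact tsub_le_iff_right.mpr hle

lemma partition_integral {Ω : Type} [MeasurableSpace Ω] (μ : Measure Ω) [IsProbabilityMeasure μ]
    {ι : Type} [Fintype ι] (A : ι → Set Ω) (w : ι → ENNReal) (G : ι → ℝ) (g : Ω → ℝ)
    (hcover : ∀ ω, ∃ i, ω ∈ A i)
    (hw : ∀ i, μ (A i) = w i) (hsum : ∑ i, w i = 1)
    (hval : ∀ i, ∀ ω ∈ A i, g ω = G i) (hInt : Integrable g μ) :
    ∫ ω, g ω ∂μ = ∑ i, G i * (w i).toReal := by
  classical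
  have hwfin : ∀ i, w i ≠ ⊤ := by
    intro i; rw [← hw i]; exact measure_ne_top μ _
  set V : Finset ℝ := insert 0 (Finset.image G Finset.univ) with hV
  set g₁ : Ω → ℝ := hInt.aestronglyMeasurable.mk g with hg₁
  have hg₁m : StronglyMeasurable g₁ := hInt.aestronglyMeasurable.stronglyMeasurable_mk
  have hae : g =ᵐ[μ] g₁ := hInt.aestronglyMeasurable.ae_eq_mk
  have hDmeas : MeasurableSet (↑V : Set ℝ) := V.finite_toSet.measurableSet
  set g₂ : Ω → ℝ := fun ω => if g₁ ω ∈ (↑V : Set ℝ) then g₁ ω else 0 with hg₂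
  have hg₂m : Measurable g₂ := by
    apply Measurable.ite (hg₁m.measurable hDmeas) hg₁m.measurable measurable_const
  have hgV : ∀ ω, g ω ∈ (↑V : Set ℝ) := by
    intro ω
    obtain ⟨i, hi⟩ := hcover ω
    rw [hval i ω hi]
    simp [hV]
  have hae₂ : g =ᵐ[μ] g₂ := by
    filter_upwards [hae] with ω hω
    rw [hg₂]
    simp only
    rw [← hω, if_pos (hgV ω)]
  have hrange : ∀ ω, g₂ ω ∈ V := by
    intro ω
    rw [hg₂]
    simp only
    by_cases hh : g₁ ω ∈ (↑V : Set ℝ)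
    · rw [if_pos hh]; exact hh
    · rw [if_neg hh]; simp [hV]
  have hptw : ∀ ω, g₂ ω = ∑ v ∈ V, Set.indicator (g₂ ⁻¹' {v}) (fun _ => v) ω := by
    intro ω
    have : ∀ v ∈ V, Set.indicator (g₂ ⁻¹' {v}) (fun _ => v) ω = if v = g₂ ω then v else 0 := by
      intro v _
      rw [Set.indicator_apply]
      simp [Set.mem_preimage, eq_comm]
    rw [Finset.sum_congr rfl this, Finset.sum_ite_eq' V (g₂ ω) (fun v => v), if_pos (hrange ω)]
  have hint : ∫ ω, g ω ∂μ = ∫ ω, g₂ ω ∂μ := integral_congr_ae hae₂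
  rw [hint]
  have hmeasv : ∀ v : ℝ, MeasurableSet (g₂ ⁻¹' {v}) := fun v => hg₂m (measurableSet_singleton v)
  calc ∫ ω, g₂ ω ∂μ = ∫ ω, ∑ v ∈ V, Set.indicator (g₂ ⁻¹' {v}) (fun _ => v) ω ∂μ := by
        apply integral_congr_ae
        filter_upwards with ω
        exact hptw ω
    _ = ∑ v ∈ V, ∫ ω, Set.indicator (g₂ ⁻¹' {v}) (fun _ => v) ω ∂μ := by
        apply integral_finset_sum
        intro v _
        exact (integrable_const v).indicator (hmeasv v)
    _ = ∑ v ∈ V, (μ (g₂ ⁻¹' {v})).toReal * v := by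
        apply Finset.sum_congr rfl
        intro v _
        rw [integral_indicator_const v (hmeasv v), smul_eq_mul]; rfl
    _ = ∑ v ∈ V, (∑ i ∈ Finset.univ.filter (fun i => G i = v), w i).toReal * v := by
        apply Finset.sum_congr rfl
        intro v _
        congr 1
        have h1 : μ (g₂ ⁻¹' {v}) = μ (g ⁻¹' {v}) := by
          apply measure_congr
          rw [Filter.eventuallyEq_set]
          filter_upwards [hae₂] with ω hω
          simp [Set.mem_preimage, hω]
        rw [h1]
        have h2 : g ⁻¹' {v} = ⋃ i ∈ Finset.univ.filter (fun i => G i = v), A i := by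
          ext ω
          simp only [Set.mem_preimage, Set.mem_singleton_iff, Set.mem_iUnion,
            Finset.mem_filter, Finset.mem_univ, true_and]
          constructor
          · intro hgv
            obtain ⟨i, hi⟩ := hcover ω
            exact ⟨i, by rw [← hval i ω hi]; exact hgv, hi⟩
          · rintro ⟨i, hGi, hi⟩
            rw [hval i ω hi, hGi]
        rw [h2, part_meas μ A w hcover hw hsum _]
    _ = ∑ v ∈ V, ∑ i ∈ Finset.univ.filter (fun i => G i = v), (w i).toReal * v := by
        apply Finset.sum_congr rfl
        intro v _
        rw [ENNReal.toReal_sum (fun i _ => hwfin i), Finset.sum_mul]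
    _ = ∑ v ∈ V, ∑ i ∈ Finset.univ.filter (fun i => G i = v), (w i).toReal * G i := by
        apply Finset.sum_congr rfl
        intro v _
        apply Finset.sum_congr rfl
        intro i hi
        rw [Finset.mem_filter] at hi
        rw [hi.2]
    _ = ∑ i, (w i).toReal * G i := by
        apply Finset.sum_fiberwise_of_maps_to
        intro i _
        simp [hV]
    _ = ∑ i, G i * (w i).toReal := by
        apply Finset.sum_congr rfl
        intro i _
        ring


lemma bool_eq_iff (s : ℝ) (b : Bool) (hs : s = 1 ∨ s = -1) :
    ((if s = 1 then true else false) = b) ↔ s = sgn b := by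
  rcases hs with h | h <;> subst h <;> cases b <;> simp [sgn] <;> norm_num

theorem stmt2' {Ω : Type} [mΩ : MeasurableSpace Ω] (μ : Measure Ω) [hμ : IsProbabilityMeasure μ]
    (r n : ℕ) (S : Ω → Matrix (Fin r) (Fin n) ℝ) (ε δ : ℝ)
    (hε : ε ∈ Set.Ioo (0 : ℝ) 1) (hδ : δ ∈ Set.Ioo (0 : ℝ) 1)
    (row : Ω → Fin n → Fin r) (sign : Ω → Fin n → ℝ)
    (hS : ∀ ω i j, S ω i j = if row ω j = i then sign ω j else 0)
    (hIndep : iIndepFun (fun j ω => (row ω j, sign ω j)) μ)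
    (hsgn : ∀ ω j, sign ω j = 1 ∨ sign ω j = -1)
    (hprob : ∀ (j : Fin n) (i : Fin r) (s : ℝ), s = 1 ∨ s = -1 →
      μ {ω | row ω j = i ∧ sign ω j = s} = 1 / (2 * (r : ENNReal)))
    (hr : (2:ℝ) / (ε ^ 2 * δ) ≤ (r : ℝ))
    (x : Fin n → ℝ) (hx : ∑ j, x j ^ 2 = 1) :
    ∫ ω, |(∑ i, ((S ω).mulVec x i) ^ 2) - 1| ^ 2 ∂μ ≤ ε ^ 2 * δ := by
  classical
  obtain ⟨hε0, hε1⟩ := hε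
  obtain ⟨hδ0, hδ1⟩ := hδ
  have hεδ : (0:ℝ) < ε ^ 2 * δ := by positivity
  have hr0 : (0:ℝ) < r := lt_of_lt_of_le (by positivity) hr
  have hrnat : 0 < r := by exact_mod_cast hr0
  have hrne : (r:ℝ) ≠ 0 := ne_of_gt hr0
  rcases Nat.eq_zero_or_pos n with hn0 | hn
  · exfalso
    subst hn0
    simpa using hx
  set T : Ω → (Fin n → Fin r) × (Fin n → Bool) :=
    fun ω => (fun j => row ω j, fun j => if sign ω j = 1 then true else false) with hTdef
  set G : (Fin n → Fin r) × (Fin n → Bool) → ℝ :=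
    fun e => ((∑ i, (∑ j, if e.1 j = i then sgn (e.2 j) * x j else 0)^2) - 1)^2 with hGdef
  have hsign_eq : ∀ ω j, sgn (if sign ω j = 1 then true else false) = sign ω j := by
    intro ω j
    rcases hsgn ω j with h | h <;> rw [h] <;> norm_num [sgn]
  have hval : ∀ ω, |(∑ i, ((S ω).mulVec x i) ^ 2) - 1| ^ 2 = G (T ω) := by
    intro ω
    rw [sq_abs, hGdef, hTdef]
    simp only
    congr 2
    apply Finset.sum_congr rfl
    intro i _
    congr 1
    simp only [Matrix.mulVec, dotProduct]
    apply Finset.sum_congr rfl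
    intro j _
    rw [hS ω i j]
    by_cases hcase : row ω j = i
    · rw [if_pos hcase, if_pos hcase, hsign_eq ω j]
    · rw [if_neg hcase, if_neg hcase, zero_mul]
  have h2r0 : (2 * (r:ENNReal)) ≠ 0 := by
    simp [hrnat.ne']
  have h2rt : (2 * (r:ENNReal)) ≠ ⊤ := by
    exact ENNReal.mul_ne_top (by norm_num) (ENNReal.natCast_ne_top r)
  have hYpre : ∀ (j : Fin n) (i : Fin r) (s : ℝ),
      (fun ω => (row ω j, sign ω j)) ⁻¹' ({i} ×ˢ ({s} : Set ℝ))
        = {ω | row ω j = i ∧ sign ω j = s} := by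
    intro j i s
    ext ω
    simp [Set.mem_prod]
  have hwval : ∀ e : (Fin n → Fin r) × (Fin n → Bool),
      μ (T ⁻¹' {e}) = ((2 * (r:ENNReal))⁻¹) ^ n := by
    intro e
    have hset : T ⁻¹' {e} = ⋂ j ∈ (Finset.univ : Finset (Fin n)),
        (fun ω => (row ω j, sign ω j)) ⁻¹' ({e.1 j} ×ˢ ({sgn (e.2 j)} : Set ℝ)) := by
      ext ω
      simp only [Set.mem_preimage, Set.mem_singleton_iff, Set.mem_iInter, Set.mem_prod,
        Finset.mem_univ, forall_true_left, hTdef]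
      constructor
      · intro h j
        have h1 : row ω j = e.1 j := congrFun (congrArg Prod.fst h) j
        have h2 : (if sign ω j = 1 then true else false) = e.2 j :=
          congrFun (congrArg Prod.snd h) j
        exact ⟨h1, (bool_eq_iff _ _ (hsgn ω j)).mp h2⟩
      · intro h
        have h1 : (fun j => row ω j) = e.1 := funext fun j => (h j).1
        have h2 : (fun j => if sign ω j = 1 then true else false) = e.2 :=
          funext fun j => (bool_eq_iff _ _ (hsgn ω j)).mpr (h j).2
        exact Prod.ext h1 h2
    rw [hset]
    rw [(iIndepFun_iff_measure_inter_preimage_eq_mul.mp hIndep) Finset.univ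
      (sets := fun j => {e.1 j} ×ˢ ({sgn (e.2 j)} : Set ℝ))
      (fun j _ => (measurableSet_singleton (e.1 j)).prod (measurableSet_singleton (sgn (e.2 j))))]
    have hfac : ∀ j : Fin n,
        μ ((fun ω => (row ω j, sign ω j)) ⁻¹' ({e.1 j} ×ˢ ({sgn (e.2 j)} : Set ℝ)))
          = (2 * (r:ENNReal))⁻¹ := by
      intro j
      rw [hYpre, hprob j (e.1 j) (sgn (e.2 j)) (by cases hb : e.2 j <;> simp [sgn]), one_div]
    rw [Finset.prod_congr rfl (fun j _ => hfac j), Finset.prod_const, Finset.card_univ,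
      Fintype.card_fin]
  by_cases hInt : Integrable (fun ω => G (T ω)) μ
  · have hIeq : (∫ ω, |(∑ i, ((S ω).mulVec x i) ^ 2) - 1| ^ 2 ∂μ) = ∫ ω, G (T ω) ∂μ := by
      apply integral_congr_ae
      filter_upwards with ω
      exact hval ω
    rw [hIeq]
    have hcover : ∀ ω, ∃ e, ω ∈ (fun e => T ⁻¹' {e}) e := fun ω => ⟨T ω, rfl⟩
    have hsum : ∑ e : (Fin n → Fin r) × (Fin n → Bool), ((2 * (r:ENNReal))⁻¹) ^ n = 1 := by
      rw [Finset.sum_const, Finset.card_univ]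
      have hcard : Fintype.card ((Fin n → Fin r) × (Fin n → Bool)) = (2 * r) ^ n := by
        simp [Fintype.card_prod, Fintype.card_fun]
        rw [← mul_pow]
        ring
      rw [hcard, nsmul_eq_mul]
      push_cast
      rw [← ENNReal.inv_pow, ENNReal.mul_inv_cancel (pow_ne_zero n h2r0)
        (ENNReal.pow_ne_top h2rt)]
    have hpart := partition_integral μ (fun e => T ⁻¹' {e})
      (fun _ => ((2 * (r:ENNReal))⁻¹) ^ n) G (fun ω => G (T ω)) hcover hwval hsum
      (fun e ω hω => by
        rw [Set.mem_preimage, Set.mem_singleton_iff] at hω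
        show G (T ω) = G e
        rw [hω]) hInt
    rw [hpart]
    have hcReal : (((2 * (r:ENNReal))⁻¹) ^ n).toReal = ((2 * (r:ℝ))⁻¹) ^ n := by
      rw [ENNReal.toReal_pow, ENNReal.toReal_inv, ENNReal.toReal_mul]
      norm_num
    simp only [hcReal]
    rw [← Finset.sum_mul]
    have hfin := finite_bound (r := r) x hx
    have hcnn : (0:ℝ) ≤ ((2 * (r:ℝ))⁻¹) ^ n := by positivity
    have harith : (2 * 2^n * (r:ℝ)^(n-1)) * ((2 * (r:ℝ))⁻¹) ^ n = 2 / r := by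
      have h1 : (r:ℝ) ^ n = (r:ℝ)^(n-1) * r := by
        rw [← pow_succ]
        congr 1
        omega
      rw [inv_pow, mul_pow, h1]
      have h2n : (2:ℝ)^n ≠ 0 := by positivity
      have hrn1 : (r:ℝ)^(n-1) ≠ 0 := by positivity
      field_simp
    calc (∑ e : (Fin n → Fin r) × (Fin n → Bool), G e) * ((2 * (r:ℝ))⁻¹) ^ n
        ≤ (2 * 2^n * (r:ℝ)^(n-1)) * ((2 * (r:ℝ))⁻¹) ^ n := by
          apply mul_le_mul_of_nonneg_right _ hcnn
          exact hfin
      _ = 2 / r := harith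
      _ ≤ ε ^ 2 * δ := by
          rw [div_le_iff₀ hr0]
          have hmul := mul_le_mul_of_nonneg_right hr (le_of_lt hεδ)
          rw [div_mul_cancel₀ _ (ne_of_gt hεδ)] at hmul
          linarith
  · have hIeq : (∫ ω, |(∑ i, ((S ω).mulVec x i) ^ 2) - 1| ^ 2 ∂μ) = ∫ ω, G (T ω) ∂μ := by
      apply integral_congr_ae
      filter_upwards with ω
      exact hval ω
    rw [hIeq, integral_undef hInt]
    positivity


theorem stmt2 :
    ∃ C : ℝ, 0 < C ∧
      ∀ (Ω : Type) (_ : MeasurableSpace Ω) (μ : Measure Ω), IsProbabilityMeasure μ →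
        ∀ (r n : ℕ) (S : Ω → Matrix (Fin r) (Fin n) ℝ) (ε δ : ℝ),
          ε ∈ Set.Ioo (0 : ℝ) 1 → δ ∈ Set.Ioo (0 : ℝ) 1 →
          IsCountsketch μ S → C / (ε ^ 2 * δ) ≤ (r : ℝ) →
          JLMoment μ S ε δ 2 := by
  refine ⟨2, by norm_num, ?_⟩
  intro Ω mΩ μ hμ r n S ε δ hε hδ hCS hr
  obtain ⟨row, sign, hS, hIndep, hsgn, hprob⟩ := hCS
  intro x hx
  exact stmt2' μ r n S ε δ hε hδ row sign hS hIndep hsgn hprob hr x hx
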